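/- arXiv:1107.2464 — 5 statements merged into one kernel-verified Lean document; each statement's English description precedes it below -/
import Mathlib

section
/- Comparison theorem (SAIS dominated by SIS): Suppose p, p', q : ℝ → Fin N → ℝ are continuously differentiable, take values in [0,1], and satisfy ṗ_i = β₀(1 - p_i)Σ_j a_ij p_j - (β₀ - β_a) q_i Σ_j a_ij p_j - δ p_i and ṗ'_i = β₀(1 - p'_i)Σ_j a_ij p'_j - δ p'_i, where a_ij ≥ 0, 0 ≤ β_a ≤ β₀, δ > 0, and q_i(t) ≥ 0 for all t. If p_i(t₀) = p'_i(t₀) for all i, then p_i(t) ≤ p'_i(t) for all i and all t ≥ t₀. -/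
open Filter Set Topology

/-- comparison theorem, SAIS infection probabilities are dominated
by the SIS infection probabilities from the same initial condition. -/
theorem sais_dominated_by_sis (N : ℕ) (a : Fin N → Fin N → ℝ)
    (ha : ∀ i j, 0 ≤ a i j) (β₀ βa δ : ℝ)
    (hβa : 0 ≤ βa) (hβ : βa ≤ β₀) (hδ : 0 < δ)
    (t₀ : ℝ) (p p' q : ℝ → Fin N → ℝ)
    (hpC1 : ∀ i, ContDiff ℝ 1 (fun t => p t i))
    (hp'C1 : ∀ i, ContDiff ℝ 1 (fun t => p' t i))
    (hqC1 : ∀ i, ContDiff ℝ 1 (fun t => q t i))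
    (hp01 : ∀ t i, p t i ∈ Set.Icc (0:ℝ) 1)
    (hp'01 : ∀ t i, p' t i ∈ Set.Icc (0:ℝ) 1)
    (hq0 : ∀ t i, 0 ≤ q t i)
    (hode : ∀ t i, HasDerivAt (fun t => p t i)
      (β₀ * (1 - p t i) * (∑ j, a i j * p t j)
        - (β₀ - βa) * q t i * (∑ j, a i j * p t j) - δ * p t i) t)
    (hode' : ∀ t i, HasDerivAt (fun t => p' t i)
      (β₀ * (1 - p' t i) * (∑ j, a i j * p' t j) - δ * p' t i) t)
    (hinit : ∀ i, p t₀ i = p' t₀ i) :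
    ∀ i, ∀ t, t₀ ≤ t → p t i ≤ p' t i := by
  intro i t ht
  have hne : (Finset.univ : Finset (Fin N)).Nonempty := ⟨i, Finset.mem_univ i⟩
  have hβ0 : (0:ℝ) ≤ β₀ := hβa.trans hβ
  set f : ℝ → ℝ := fun s => Finset.univ.sup' hne (fun j => max 0 (p s j - p' s j))
    with hfdef
  set K : ℝ := β₀ * ∑ i', ∑ k, a i' k with hKdef
  have hK0 : 0 ≤ K :=
    mul_nonneg hβ0 (Finset.sum_nonneg fun _ _ => Finset.sum_nonneg fun _ _ => ha _ _)
  have hfle : ∀ s j, p s j - p' s j ≤ f s := fun s j =>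
    le_trans (le_max_right _ _)
      (Finset.le_sup' (fun j => max 0 (p s j - p' s j)) (Finset.mem_univ j))
  have hf0 : ∀ s, 0 ≤ f s := fun s =>
    le_trans (le_max_left _ _)
      (Finset.le_sup' (fun j => max 0 (p s j - p' s j)) (Finset.mem_univ i))
  have hcu : ∀ j, Continuous (fun s => p s j - p' s j) := fun j =>
    ((hpC1 j).continuous).sub ((hp'C1 j).continuous)
  have hcf : Continuous f := by
    rw [continuous_iff_continuousAt]
    intro x
    exact ContinuousAt.finset_sup'_apply hne fun j _ =>
      (continuous_const.max (hcu j)).continuousAt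
  -- Key differential inequality at an index attaining the maximum
  have key : ∀ (x : ℝ) (j : Fin N), p x j - p' x j = f x →
      (β₀ * (1 - p x j) * (∑ k, a j k * p x k)
        - (β₀ - βa) * q x j * (∑ k, a j k * p x k) - δ * p x j)
      - (β₀ * (1 - p' x j) * (∑ k, a j k * p' x k) - δ * p' x j) ≤ K * f x := by
    intro x j hj
    have hA : 0 ≤ ∑ k, a j k * p x k :=
      Finset.sum_nonneg fun k _ => mul_nonneg (ha j k) (hp01 x k).1
    have hA' : 0 ≤ ∑ k, a j k * p' x k :=
      Finset.sum_nonneg fun k _ => mul_nonneg (ha j k) (hp'01 x k).1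
    have hU : (∑ k, a j k * p x k) - (∑ k, a j k * p' x k) ≤ (∑ k, a j k) * f x := by
      rw [← Finset.sum_sub_distrib, Finset.sum_mul]
      apply Finset.sum_le_sum
      intro k _
      have h1 := hfle x k
      have h2 := ha j k
      nlinarith
    have hR : (∑ k, a j k) ≤ ∑ i', ∑ k, a i' k :=
      Finset.single_le_sum (f := fun i' => ∑ k, a i' k)
        (fun i' _ => Finset.sum_nonneg fun k _ => ha i' k) (Finset.mem_univ j)
    have h1p : 0 ≤ 1 - p x j := by linarith [(hp01 x j).2]
    have h2p : 1 - p x j ≤ 1 := by linarith [(hp01 x j).1]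
    have hq := hq0 x j
    have hfx := hf0 x
    have hβd : 0 ≤ β₀ - βa := by linarith
    have hS : 0 ≤ (∑ k, a j k) * f x :=
      mul_nonneg (Finset.sum_nonneg fun k _ => ha j k) hfx
    calc
      (β₀ * (1 - p x j) * (∑ k, a j k * p x k)
          - (β₀ - βa) * q x j * (∑ k, a j k * p x k) - δ * p x j)
        - (β₀ * (1 - p' x j) * (∑ k, a j k * p' x k) - δ * p' x j)
          = β₀ * (1 - p x j) * ((∑ k, a j k * p x k) - (∑ k, a j k * p' x k))
            - (β₀ * (∑ k, a j k * p' x k) + δ) * f x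
            - (β₀ - βa) * q x j * (∑ k, a j k * p x k) := by
            rw [← hj]; ring
      _ ≤ β₀ * (1 - p x j) * ((∑ k, a j k * p x k) - (∑ k, a j k * p' x k)) := by
            nlinarith [mul_nonneg (mul_nonneg hβd hq) hA, mul_nonneg (mul_nonneg hβ0 hA') hfx,
              mul_nonneg hδ.le hfx]
      _ ≤ β₀ * (1 - p x j) * ((∑ k, a j k) * f x) :=
            mul_le_mul_of_nonneg_left hU (mul_nonneg hβ0 h1p)
      _ ≤ β₀ * 1 * ((∑ k, a j k) * f x) :=
            mul_le_mul_of_nonneg_right (mul_le_mul_of_nonneg_left h2p hβ0) hS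
      _ = (β₀ * (∑ k, a j k)) * f x := by ring
      _ ≤ K * f x := by
            rw [hKdef]
            exact mul_le_mul_of_nonneg_right (mul_le_mul_of_nonneg_left hR hβ0) hfx
  -- Grönwall argument: f ≤ 0 on [t₀, ∞)
  have main : ∀ s, t₀ ≤ s → f s ≤ 0 := by
    intro s hs
    have h : ∀ x ∈ Set.Icc t₀ s, f x ≤ gronwallBound 0 K 0 (x - t₀) := by
      refine le_gronwallBound_of_liminf_deriv_right_le (f' := fun x => K * f x)
        hcf.continuousOn ?_ ?_ ?_
      · -- liminf slope condition
        intro x _ r hr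
        have hr0 : 0 < r := lt_of_le_of_lt (mul_nonneg hK0 (hf0 x)) hr
        by_contra hcon
        rw [Filter.not_frequently] at hcon
        push_neg at hcon
        have hmem : ∀ᶠ z in 𝓝[>] x, x < z := eventually_mem_nhdsWithin
        have hstep : ∀ᶠ z in 𝓝[>] x,
            ∃ j, x < z ∧ f x + r * (z - x) ≤ p z j - p' z j := by
          filter_upwards [hcon, hmem] with z h1 h2
          obtain ⟨j, -, hjz⟩ :=
            Finset.exists_mem_eq_sup' hne (fun j => max 0 (p z j - p' z j))
          have hzx : 0 < z - x := sub_pos.2 h2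
          have hfz : f x + r * (z - x) ≤ f z := by
            have := (le_inv_mul_iff₀ hzx).1 h1
            linarith
          have hpos : 0 < f x + r * (z - x) := by nlinarith [hf0 x]
          have hfz' : f z = max 0 (p z j - p' z j) := hjz
          rw [hfz'] at hfz
          rcases le_max_iff.1 hfz with h | h
          · linarith
          · exact ⟨j, h2, h⟩
        have hpig : ∃ j, ∃ᶠ z in 𝓝[>] x,
            x < z ∧ f x + r * (z - x) ≤ p z j - p' z j := by
          by_contra hno
          push_neg at hno
          have hall := Filter.eventually_all.2 hno
          obtain ⟨z, hz1, hz2⟩ := (hstep.and hall).exists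
          obtain ⟨j, hj⟩ := hz1
          exact absurd hj.2 (not_le.2 (hz2 j hj.1))
        obtain ⟨j, hfreq⟩ := hpig
        set l : Filter ℝ :=
          𝓝[>] x ⊓ Filter.principal {z | x < z ∧ f x + r * (z - x) ≤ p z j - p' z j}
          with hldef
        haveI hlne : l.NeBot := Filter.frequently_iff_neBot.1 hfreq
        have hev : ∀ᶠ z in l, x < z ∧ f x + r * (z - x) ≤ p z j - p' z j := by
          rw [hldef]
          exact (Filter.eventually_inf_principal).2 (Filter.Eventually.of_forall fun z h => h)
        have hlle : l ≤ 𝓝 x := le_trans inf_le_left nhdsWithin_le_nhds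
        have hlx : Filter.Tendsto (fun z : ℝ => z) l (𝓝 x) := tendsto_id.mono_left hlle
        -- (a) j attains the max at x
        have hujx : p x j - p' x j = f x := by
          have hgc : Continuous (fun z => (p z j - p' z j) - (f x + r * (z - x))) :=
            (hcu j).sub (continuous_const.add (continuous_const.mul
              ((continuous_id).sub continuous_const)))
          have htend : Filter.Tendsto (fun z => (p z j - p' z j) - (f x + r * (z - x))) l
              (𝓝 ((p x j - p' x j) - (f x + r * (x - x)))) :=
            (hgc.tendsto x).comp hlx
          have h0 : (0:ℝ) ≤ (p x j - p' x j) - (f x + r * (x - x)) :=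
            ge_of_tendsto htend (hev.mono fun z hz => sub_nonneg.2 hz.2)
          have := hfle x j
          simp only [sub_self, mul_zero, add_zero] at h0
          linarith
        -- (b) derivative at x is at least r
        have hd := (hode x j).sub (hode' x j)
        have hslope := hasDerivAt_iff_tendsto_slope.1 hd
        have hlne' : l ≤ 𝓝[≠] x := le_trans inf_le_left
          (nhdsWithin_mono x fun z hz => Set.mem_compl_singleton_iff.2 (ne_of_gt hz))
        have hslopel := hslope.mono_left hlne'
        have hrd : r ≤ (β₀ * (1 - p x j) * (∑ k, a j k * p x k)
            - (β₀ - βa) * q x j * (∑ k, a j k * p x k) - δ * p x j)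
            - (β₀ * (1 - p' x j) * (∑ k, a j k * p' x k) - δ * p' x j) := by
          refine ge_of_tendsto hslopel (hev.mono fun z hz => ?_)
          have hzx : 0 < z - x := sub_pos.2 hz.1
          rw [slope_def_field, le_div_iff₀ hzx]
          have := hz.2
          simp only [Pi.sub_apply]
          rw [hujx]
          linarith
        have hK := key x j hujx
        have hr' : K * f x < r := hr
        linarith
      · -- initial condition
        refine Finset.sup'_le hne _ fun j _ => ?_
        rw [hinit j]
        simp
      · -- bound
        intro x _
        simp
    have h2 := h s ⟨hs, le_rfl⟩
    rwa [gronwallBound_ε0_δ0] at h2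
  have h1 := main t ht
  have h2 := hfle t i
  linarith
end

section
/- Steady-state reduction: any equilibrium (p^ss, q^ss) of the SAIS model, i.e. satisfying 0 = β₀(1-p_i^ss-q_i^ss)Σ_j a_ij p_j^ss + β_a q_i^ss Σ_j a_ij p_j^ss - δ p_i^ss and 0 = κ(1-p_i^ss-q_i^ss)Σ_j a_ij p_j^ss - β_a q_i^ss Σ_j a_ij p_j^ss, satisfies β_eq(1 - p_i^ss)Σ_j a_ij p_j^ss - δ p_i^ss = 0 for every i, where β_eq = β₀(β_a/κ)/(1+β_a/κ) + β_a/(1+β_a/κ). -/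
/-- any SAIS equilibrium satisfies the SIS steady-state equation
with the reduced infection rate β_eq. -/
theorem steady_state_reduction (N : ℕ) (a : Fin N → Fin N → ℝ)
    (β₀ βa κ δ : ℝ) (hκ : 0 < κ) (hβa : 0 ≤ βa)
    (pss qss : Fin N → ℝ) (hp01 : ∀ i, pss i ∈ Set.Icc (0:ℝ) 1)
    (heqp : ∀ i, β₀ * (1 - pss i - qss i) * (∑ j, a i j * pss j)
      + βa * qss i * (∑ j, a i j * pss j) - δ * pss i = 0)
    (heqq : ∀ i, κ * (1 - pss i - qss i) * (∑ j, a i j * pss j)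
      - βa * qss i * (∑ j, a i j * pss j) = 0) :
    ∀ i, (β₀ * (βa / κ) / (1 + βa / κ) + βa * (1 / (1 + βa / κ)))
      * (1 - pss i) * (∑ j, a i j * pss j) - δ * pss i = 0 := by
  intro i
  have hP := heqp i
  have hQ := heqq i
  set S := ∑ j, a i j * pss j with hSdef
  have hκ' : κ ≠ 0 := hκ.ne'
  have hd : (1 : ℝ) + βa / κ ≠ 0 := by positivity
  have hfac : (κ * (1 - pss i - qss i) - βa * qss i) * S = 0 := by ring_nf; linarith [hQ]
  rcases mul_eq_zero.mp hfac with h | hS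
  · -- κ x = βa q
    have h' : κ * (1 - pss i - qss i) = βa * qss i := by linarith
    field_simp
    linear_combination (κ + βa) * hP + (βa - β₀) * S * h'
  · simp [hS] at hP ⊢
    tauto
end

section
/- Equivalently, if p_i^ss < 1 for all i, the steady-state infection probabilities satisfy (β_eq/δ) Σ_j a_ij p_j^ss = p_i^ss/(1 - p_i^ss) for each i, which is exactly the steady-state equation of the SIS N-intertwined model with infection rate β_eq. -/
/-- when p_i^ss < 1, the SAIS equilibrium satisfies exactly the
SIS N-intertwined steady-state equation with rate β_eq. -/
theorem steady_state_sis_form (N : ℕ) (a : Fin N → Fin N → ℝ)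
    (β₀ βa κ δ : ℝ) (hκ : 0 < κ) (hβa : 0 ≤ βa) (hδ : 0 < δ)
    (pss qss : Fin N → ℝ) (hp01 : ∀ i, pss i ∈ Set.Ico (0:ℝ) 1)
    (heqp : ∀ i, β₀ * (1 - pss i - qss i) * (∑ j, a i j * pss j)
      + βa * qss i * (∑ j, a i j * pss j) - δ * pss i = 0)
    (heqq : ∀ i, κ * (1 - pss i - qss i) * (∑ j, a i j * pss j)
      - βa * qss i * (∑ j, a i j * pss j) = 0) :
    ∀ i, ((β₀ * (βa / κ) / (1 + βa / κ) + βa * (1 / (1 + βa / κ))) / δ)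
      * (∑ j, a i j * pss j) = pss i / (1 - pss i) := by
  intro i
  have h1p : 0 < 1 - pss i := by have := (hp01 i).2; linarith
  have hκβa : 0 < κ + βa := by linarith
  have key : βa * (β₀ + κ) * ((1 - pss i) * (∑ j, a i j * pss j))
      = δ * pss i * (κ + βa) := by
    linear_combination (κ + βa) * (heqp i) + (βa - β₀) * (heqq i)
  have hκ' : κ ≠ 0 := ne_of_gt hκ
  have h1 : (1 : ℝ) + βa / κ ≠ 0 := by positivity
  field_simp
  linear_combination key
end

section
/- SIS exponential die-out (linear comparison): let A be a symmetric nonnegative N×N matrix, β₀, δ > 0 with β₀ ρ(A) < δ. If p : ℝ → ℝ^N is C¹ with 0 ≤ p_i(t) ≤ 1 and ṗ_i = β₀(1 - p_i)Σ_j A_ij p_j - δ p_i, then ‖p(t)‖ ≤ ‖p(0)‖ e^{(β₀ρ(A) - δ)t} for all t ≥ 0; in particular p(t) → 0 exponentially. -/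
lemma quadForm_le (N : ℕ) (A : Matrix (Fin N) (Fin N) ℝ) (hA : A.IsSymm)
    (ρ : ℝ) (hρ : ∀ μ ∈ spectrum ℝ A, |μ| ≤ ρ) (x : Fin N → ℝ) :
    dotProduct x (A.mulVec x) ≤ ρ * dotProduct x x := by
  have hH : A.IsHermitian := by
    rwa [Matrix.IsHermitian, Matrix.conjTranspose_eq_transpose_of_trivial]
  set b := hH.eigenvectorBasis with hb
  set X : EuclideanSpace ℝ (Fin N) := WithLp.toLp 2 x with hX
  set Y : EuclideanSpace ℝ (Fin N) := WithLp.toLp 2 (A.mulVec x) with hY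
  have h1 : dotProduct x (A.mulVec x) = @inner ℝ _ _ X Y := by
    simp [PiLp.inner_apply, dotProduct, RCLike.inner_apply, hX, hY, mul_comm]
  have h2 : dotProduct x x = @inner ℝ _ _ X X := by
    rw [hX, PiLp.inner_apply]; simp [dotProduct, sq]
  have hbi : ∀ i, @inner ℝ _ _ (b i) Y = hH.eigenvalues i * @inner ℝ _ _ (b i) X := by
    intro i
    have hv : A.mulVec ((WithLp.equiv 2 _) (b i))
        = hH.eigenvalues i • ((WithLp.equiv 2 _) (b i)) :=
      hH.mulVec_eigenvectorBasis i
    set v : Fin N → ℝ := (WithLp.equiv 2 _) (b i) with hvdef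
    have hcoe : ∀ j, b i j = v j := fun j => rfl
    have hsymm : dotProduct v (A.mulVec x) = dotProduct (A.mulVec v) x := by
      rw [Matrix.dotProduct_mulVec, ← Matrix.mulVec_transpose, hA.eq]
    simp only [PiLp.inner_apply, RCLike.inner_apply, starRingEnd_apply, star_trivial]
    calc (∑ j, Y j * b i j) = dotProduct v (A.mulVec x) := by
          simp only [hcoe]; rw [dotProduct]; exact Finset.sum_congr rfl fun j _ => mul_comm _ _
    _ = dotProduct (A.mulVec v) x := hsymm
    _ = dotProduct (hH.eigenvalues i • v) x := by rw [hv]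
    _ = hH.eigenvalues i * ∑ j, X j * b i j := by
        simp [smul_dotProduct, dotProduct, Finset.mul_sum, mul_assoc, hcoe, hX, mul_comm]
        refine Finset.sum_congr rfl fun _ _ => ?_; ring
  have key : @inner ℝ _ _ X Y = ∑ i, hH.eigenvalues i * (@inner ℝ _ _ (b i) X)^2 := by
    rw [← b.sum_inner_mul_inner X Y]
    refine Finset.sum_congr rfl fun i _ => ?_
    rw [hbi i, real_inner_comm X (b i)]; ring
  have keyX : @inner ℝ _ _ X X = ∑ i, (@inner ℝ _ _ (b i) X)^2 := by
    rw [← b.sum_inner_mul_inner X X]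
    refine Finset.sum_congr rfl fun i _ => ?_
    rw [real_inner_comm X (b i)]; ring
  rw [h1, h2, key, keyX, Finset.mul_sum]
  refine Finset.sum_le_sum fun i _ => ?_
  have hle : hH.eigenvalues i ≤ ρ := le_of_abs_le (hρ _ (hH.eigenvalues_mem_spectrum_real i))
  exact mul_le_mul_of_nonneg_right hle (sq_nonneg _)

/-- SIS exponential die-out below the threshold:
‖p(t)‖ ≤ ‖p(0)‖ e^{(β₀ρ(A)-δ)t} for t ≥ 0. -/
theorem sis_exponential_dieout (N : ℕ) (A : Matrix (Fin N) (Fin N) ℝ)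
    (hA : A.IsSymm) (hA0 : ∀ i j, 0 ≤ A i j)
    (β₀ δ ρ : ℝ) (hβ₀ : 0 < β₀) (hδ : 0 < δ)
    (hρ : ∀ μ ∈ spectrum ℝ A, |μ| ≤ ρ) (hthr : β₀ * ρ < δ)
    (p : ℝ → Fin N → ℝ)
    (hC1 : ∀ i, ContDiff ℝ 1 (fun t => p t i))
    (hp01 : ∀ t i, p t i ∈ Set.Icc (0:ℝ) 1)
    (hode : ∀ t i, HasDerivAt (fun t => p t i)
      (β₀ * (1 - p t i) * (∑ j, A i j * p t j) - δ * p t i) t) :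
    ∀ t, 0 ≤ t →
      Real.sqrt (∑ i, (p t i)^2)
        ≤ Real.sqrt (∑ i, (p 0 i)^2) * Real.exp ((β₀ * ρ - δ) * t) := by
  set K : ℝ := β₀ * ρ - δ with hK
  set V : ℝ → ℝ := fun t => ∑ i, (p t i)^2 with hV
  set V' : ℝ → ℝ := fun t => ∑ i, (2 * p t i *
      (β₀ * (1 - p t i) * (∑ j, A i j * p t j) - δ * p t i)) with hV'
  have hVd : ∀ t, HasDerivAt V (V' t) t := by
    intro t
    refine HasDerivAt.fun_sum fun i _ => ?_
    have := (hode t i).fun_pow 2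
    simpa [mul_comm, mul_assoc, mul_left_comm] using this
  have hV0 : ∀ t, 0 ≤ V t := fun t => Finset.sum_nonneg fun i _ => sq_nonneg _
  have hbound : ∀ t, V' t ≤ 2 * K * V t := by
    intro t
    have hs : ∀ i, 0 ≤ ∑ j, A i j * p t j := fun i =>
      Finset.sum_nonneg fun j _ => mul_nonneg (hA0 i j) (hp01 t j).1
    have step1 : V' t ≤ ∑ i, (2 * β₀ * (p t i * (∑ j, A i j * p t j)) - 2 * δ * (p t i)^2) := by
      refine Finset.sum_le_sum fun i _ => ?_
      have h1 : p t i * (1 - p t i) ≤ p t i := by nlinarith [(hp01 t i).1, (hp01 t i).2]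
      have h2 : 0 ≤ p t i * (1 - p t i) := mul_nonneg (hp01 t i).1 (by linarith [(hp01 t i).2])
      nlinarith [hs i, mul_le_mul_of_nonneg_right h1 (hs i), hβ₀.le]
    have hquad : ∑ i, p t i * (∑ j, A i j * p t j) ≤ ρ * ∑ i, (p t i)^2 := by
      have := quadForm_le N A hA ρ hρ (p t)
      simpa [dotProduct, Matrix.mulVec, sq] using this
    calc V' t ≤ ∑ i, (2 * β₀ * (p t i * (∑ j, A i j * p t j)) - 2 * δ * (p t i)^2) := step1
    _ = 2 * β₀ * (∑ i, p t i * (∑ j, A i j * p t j)) - 2 * δ * V t := by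
        rw [Finset.sum_sub_distrib, ← Finset.mul_sum, ← Finset.mul_sum]
    _ ≤ 2 * β₀ * (ρ * V t) - 2 * δ * V t := by
        have := mul_le_mul_of_nonneg_left hquad (by positivity : (0:ℝ) ≤ 2 * β₀)
        linarith
    _ = 2 * K * V t := by ring
  set g : ℝ → ℝ := fun t => V t * Real.exp (-(2 * K) * t) with hg
  have hgd : ∀ t, HasDerivAt g ((V' t - 2 * K * V t) * Real.exp (-(2*K)*t)) t := by
    intro t
    have he : HasDerivAt (fun t => Real.exp (-(2*K)*t)) (-(2*K) * Real.exp (-(2*K)*t)) t := by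
      simpa [mul_comm] using ((hasDerivAt_id t).const_mul (-(2*K))).exp
    have := (hVd t).fun_mul he
    exact this.congr_deriv (by ring)
  have hganti : Antitone g := by
    refine antitone_of_deriv_nonpos (fun t => (hgd t).differentiableAt) fun t => ?_
    rw [(hgd t).deriv]
    exact mul_nonpos_of_nonpos_of_nonneg (by linarith [hbound t]) (Real.exp_pos _).le
  intro t ht
  have hVt : V t ≤ V 0 * Real.exp (2 * K * t) := by
    have := hganti ht
    have hgt : V t * Real.exp (-(2*K)*t) ≤ V 0 := by simpa [hg] using this
    have := mul_le_mul_of_nonneg_right hgt (Real.exp_pos (2*K*t)).le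
    rwa [mul_assoc, ← Real.exp_add, neg_mul, neg_add_cancel, Real.exp_zero, mul_one] at this
  calc Real.sqrt (V t) ≤ Real.sqrt (V 0 * Real.exp (2 * K * t)) := Real.sqrt_le_sqrt hVt
  _ = Real.sqrt (V 0) * Real.exp (K * t) := by
      rw [Real.sqrt_mul (hV0 0), show (2:ℝ) * K * t = (K*t) + (K*t) by ring, Real.exp_add,
        Real.sqrt_mul_self (Real.exp_pos _).le]
end

section
/- Invariance of the probability simplex region: if p, q : ℝ → ℝ^N solve the SAIS equations ṗ_i = β₀(1-p_i-q_i)Σ a_ij p_j + β_a q_i Σ a_ij p_j - δ p_i, q̇_i = κ(1-p_i-q_i)Σ a_ij p_j - β_a q_i Σ a_ij p_j with a_ij ≥ 0, β₀, β_a, κ, δ ≥ 0, and initially p_i(0) ≥ 0, q_i(0) ≥ 0, p_i(0)+q_i(0) ≤ 1 for all i, then p_i(t) ≥ 0, q_i(t) ≥ 0, and p_i(t)+q_i(t) ≤ 1 for all t ≥ 0 and all i. -/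
open Filter Set Topology


noncomputable def Dpos (g d : ℝ) : ℝ := if g < 0 then 0 else if g = 0 then max d 0 else d

lemma tendsto_quot_posPart {g : ℝ → ℝ} {d x : ℝ} (hg : HasDerivAt g d x) :
    Tendsto (fun z => (z - x)⁻¹ * (max (g z) 0 - max (g x) 0)) (𝓝[>] x)
      (𝓝 (Dpos (g x) d)) := by
  have hslope : Tendsto (fun z => (z - x)⁻¹ * (g z - g x)) (𝓝[>] x) (𝓝 d) := by
    have := (hasDerivAt_iff_tendsto_slope.mp hg).mono_left
      (nhdsWithin_mono x (fun z hz => ne_of_gt hz))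
    refine this.congr fun z => ?_
    simp [slope_def_field, div_eq_inv_mul]
  unfold Dpos
  split_ifs with h1 h2
  · -- g x < 0
    have hev : (fun z => (z - x)⁻¹ * (max (g z) 0 - max (g x) 0)) =ᶠ[𝓝[>] x]
        (fun _ => (0:ℝ)) := by
      have : ∀ᶠ z in 𝓝 x, g z < 0 := hg.continuousAt.eventually_lt continuousAt_const h1
      filter_upwards [nhdsWithin_le_nhds this] with z hz
      rw [max_eq_right hz.le, max_eq_right h1.le]; ring
    exact tendsto_const_nhds.congr' hev.symm
  · -- g x = 0
    have hev : (fun z => max ((z - x)⁻¹ * (g z - g x)) 0) =ᶠ[𝓝[>] x]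
        (fun z => (z - x)⁻¹ * (max (g z) 0 - max (g x) 0)) := by
      filter_upwards [self_mem_nhdsWithin] with z (hz : x < z)
      have hzx : (0:ℝ) ≤ (z - x)⁻¹ := (inv_pos.mpr (by linarith)).le
      rw [h2]
      simp only [max_self, sub_zero]
      rw [mul_max_of_nonneg _ _ hzx, mul_zero]
    have hcont : Tendsto (fun y : ℝ => max y 0) (𝓝 d) (𝓝 (max d 0)) :=
      ((continuous_id.max continuous_const).tendsto d)
    exact (hcont.comp hslope).congr' hev
  · -- g x > 0
    have h3 : 0 < g x := lt_of_le_of_ne (not_lt.mp h1) (Ne.symm h2)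
    have hev : (fun z => (z - x)⁻¹ * (g z - g x)) =ᶠ[𝓝[>] x]
        (fun z => (z - x)⁻¹ * (max (g z) 0 - max (g x) 0)) := by
      have : ∀ᶠ z in 𝓝 x, 0 < g z :=
        ContinuousAt.eventually_lt (f := fun _ => (0:ℝ)) continuousAt_const hg.continuousAt h3
      filter_upwards [nhdsWithin_le_nhds this] with z hz
      rw [max_eq_left hz.le, max_eq_left h3.le]
    exact hslope.congr' hev

lemma Dpos_le {g d C : ℝ} (hC : 0 ≤ C) (h : 0 ≤ g → d ≤ C) : Dpos g d ≤ C := by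
  unfold Dpos; split_ifs with h1 h2
  · exact hC
  · exact max_le (h (le_of_eq h2.symm)) hC
  · exact h (not_lt.mp h1)

lemma key_prod (c S f B C D : ℝ) (hS1 : -(B*f) ≤ S) (hS2 : S ≤ D) (hf : 0 ≤ f)
    (hc1 : -c ≤ f) (hc2 : c ≤ C) (hB : 0 ≤ B) (hD : 0 ≤ D) (hC : 0 ≤ C) :
    -((C*B + D)*f) ≤ c * S := by
  rcases le_total 0 c with h | h
  · nlinarith [mul_nonneg hB hf, mul_nonneg hD hf, mul_nonneg (mul_nonneg hC hB) hf]
  · nlinarith [mul_nonneg hD hf, mul_nonneg (mul_nonneg hC hB) hf]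


set_option maxHeartbeats 1000000 in
lemma sais_fprime_bound (N : ℕ) (a : Fin N → Fin N → ℝ) (ha : ∀ i j, 0 ≤ a i j)
    (β₀ βa κ δ A M : ℝ) (hβ₀ : 0 ≤ β₀) (hβa : 0 ≤ βa) (hκ : 0 ≤ κ) (hδ : 0 ≤ δ)
    (hA : 0 ≤ A) (hM : 0 ≤ M)
    (hAi : ∀ i : Fin N, (∑ j, a i j) ≤ A)
    (P Q : Fin N → ℝ) (hP : ∀ i, |P i| ≤ M) (hQ : ∀ i, |Q i| ≤ M) :
    (∑ i, (Dpos (-(P i)) (-(β₀ * (1 - P i - Q i) * (∑ j, a i j * P j)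
          + βa * Q i * (∑ j, a i j * P j) - δ * P i))
      + Dpos (-(Q i)) (-(κ * (1 - P i - Q i) * (∑ j, a i j * P j)
          - βa * Q i * (∑ j, a i j * P j)))
      + Dpos (P i + Q i - 1) ((β₀ * (1 - P i - Q i) * (∑ j, a i j * P j)
          + βa * Q i * (∑ j, a i j * P j) - δ * P i)
        + (κ * (1 - P i - Q i) * (∑ j, a i j * P j)
          - βa * Q i * (∑ j, a i j * P j)))))
    ≤ ((3*(N:ℝ)) * ((β₀+βa+κ+δ) * ((1+2*M)*A + A*M + 1)))
      * (∑ i, (max (-(P i)) 0 + max (-(Q i)) 0 + max (P i + Q i - 1) 0)) := by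
  set F : ℝ := ∑ i, (max (-(P i)) 0 + max (-(Q i)) 0 + max (P i + Q i - 1) 0) with hF_def
  set E : ℝ := (1+2*M)*A + A*M with hE_def
  set K₀ : ℝ := (β₀+βa+κ+δ) * (E + 1) with hK₀_def
  clear_value F E K₀
  have hF0 : 0 ≤ F := by
    rw [hF_def]; exact Finset.sum_nonneg fun i _ => by positivity
  have hE0 : 0 ≤ E := by rw [hE_def]; positivity
  have hK₀0 : 0 ≤ K₀ := by rw [hK₀_def]; positivity
  have htriple : ∀ j, max (-(P j)) 0 + max (-(Q j)) 0 + max (P j + Q j - 1) 0 ≤ F := by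
    intro j
    rw [hF_def]
    exact Finset.single_le_sum (f := fun k =>
      max (-(P k)) 0 + max (-(Q k)) 0 + max (P k + Q k - 1) 0)
      (fun k _ => by positivity) (Finset.mem_univ j)
  have htermP : ∀ j, -(P j) ≤ F := fun j => by
    have h := htriple j
    have := le_max_right (-(Q j)) (0:ℝ)
    have := le_max_right (P j + Q j - 1) (0:ℝ)
    have := le_max_left (-(P j)) (0:ℝ)
    linarith
  have htermQ : ∀ j, -(Q j) ≤ F := fun j => by
    have h := htriple j
    have := le_max_right (-(P j)) (0:ℝ)
    have := le_max_right (P j + Q j - 1) (0:ℝ)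
    have := le_max_left (-(Q j)) (0:ℝ)
    linarith
  have htermR : ∀ j, P j + Q j - 1 ≤ F := fun j => by
    have h := htriple j
    have := le_max_right (-(P j)) (0:ℝ)
    have := le_max_right (-(Q j)) (0:ℝ)
    have := le_max_left (P j + Q j - 1) (0:ℝ)
    linarith
  have key : ∀ i : Fin N,
      Dpos (-(P i)) (-(β₀ * (1 - P i - Q i) * (∑ j, a i j * P j)
          + βa * Q i * (∑ j, a i j * P j) - δ * P i))
      + Dpos (-(Q i)) (-(κ * (1 - P i - Q i) * (∑ j, a i j * P j)
          - βa * Q i * (∑ j, a i j * P j)))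
      + Dpos (P i + Q i - 1) ((β₀ * (1 - P i - Q i) * (∑ j, a i j * P j)
          + βa * Q i * (∑ j, a i j * P j) - δ * P i)
        + (κ * (1 - P i - Q i) * (∑ j, a i j * P j)
          - βa * Q i * (∑ j, a i j * P j))) ≤ 3 * (K₀ * F) := by
    intro i
    set S : ℝ := ∑ j, a i j * P j with hS_def
    clear_value S
    have hS1 : -(A*F) ≤ S := by
      have h1 : ∀ j ∈ Finset.univ, -(a i j * F) ≤ a i j * P j := fun j _ => by
        have h2 := htermP j
        nlinarith [ha i j]
      calc -(A*F) ≤ -((∑ j, a i j) * F) := by nlinarith [hAi i, hF0]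
        _ = ∑ j, -(a i j * F) := by simp [Finset.sum_mul]
        _ ≤ ∑ j, a i j * P j := Finset.sum_le_sum h1
        _ = S := hS_def.symm
    have hS2 : S ≤ A*M := by
      calc S = ∑ j, a i j * P j := hS_def
        _ ≤ ∑ j, a i j * M := Finset.sum_le_sum fun j _ =>
            mul_le_mul_of_nonneg_left (le_trans (le_abs_self _) (hP j)) (ha i j)
        _ = (∑ j, a i j) * M := by rw [Finset.sum_mul]
        _ ≤ A*M := mul_le_mul_of_nonneg_right (hAi i) hM
    have hPiM := abs_le.mp (hP i)
    have hQiM := abs_le.mp (hQ i)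
    have hC1 : (0:ℝ) ≤ 1 + 2*M := by linarith
    -- product bounds
    have hg : -(E*F) ≤ (1 - P i - Q i) * S := by
      rw [hE_def]
      exact key_prod _ _ _ A (1+2*M) (A*M) hS1 hS2 hF0
        (by have := htermR i; linarith) (by linarith) hA (by positivity) hC1
    have hq : -(E*F) ≤ Q i * S := by
      rw [hE_def]
      exact key_prod _ _ _ A (1+2*M) (A*M) hS1 hS2 hF0
        (by have := htermQ i; linarith) (by linarith) hA (by positivity) hC1
    have hKF : (0:ℝ) ≤ K₀ * F := mul_nonneg hK₀0 hF0
    have hEF : (0:ℝ) ≤ E * F := mul_nonneg hE0 hF0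
    have hK1 : (β₀+βa)*E ≤ K₀ := by rw [hK₀_def]; nlinarith [mul_nonneg hκ hE0, mul_nonneg hδ hE0]
    have hK2 : (κ+βa)*E ≤ K₀ := by rw [hK₀_def]; nlinarith [mul_nonneg hβ₀ hE0, mul_nonneg hδ hE0]
    have hK3 : (β₀+κ)*E + δ ≤ K₀ := by rw [hK₀_def]; nlinarith [mul_nonneg hβa hE0, mul_nonneg hδ hE0]
    have b1 : Dpos (-(P i)) (-(β₀ * (1 - P i - Q i) * S + βa * Q i * S - δ * P i)) ≤ K₀ * F := by
      refine Dpos_le hKF fun h => ?_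
      have e1 := mul_le_mul_of_nonneg_left hg hβ₀
      have e2 := mul_le_mul_of_nonneg_left hq hβa
      have e3 : 0 ≤ δ * (-(P i)) := mul_nonneg hδ (by linarith)
      have e5 := mul_le_mul_of_nonneg_right hK1 hF0
      linarith [e1, e2, e3, e5]
    have b2 : Dpos (-(Q i)) (-(κ * (1 - P i - Q i) * S - βa * Q i * S)) ≤ K₀ * F := by
      refine Dpos_le hKF fun h => ?_
      have hq2 : -(E*F) ≤ (-(Q i)) * S := by
        rw [hE_def]
        exact key_prod _ _ _ A (1+2*M) (A*M) hS1 hS2 hF0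
          (by linarith) (by linarith) hA (by positivity) hC1
      have e1 := mul_le_mul_of_nonneg_left hg hκ
      have e2 := mul_le_mul_of_nonneg_left hq2 hβa
      have e5 := mul_le_mul_of_nonneg_right hK2 hF0
      linarith [e1, e2, e5]
    have b3 : Dpos (P i + Q i - 1) ((β₀ * (1 - P i - Q i) * S + βa * Q i * S - δ * P i)
        + (κ * (1 - P i - Q i) * S - βa * Q i * S)) ≤ K₀ * F := by
      refine Dpos_le hKF fun h => ?_
      have hg2 : -(E*F) ≤ (P i + Q i - 1) * S := by
        rw [hE_def]
        exact key_prod _ _ _ A (1+2*M) (A*M) hS1 hS2 hF0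
          (by linarith) (by linarith) hA (by positivity) hC1
      have e1 := mul_le_mul_of_nonneg_left hg2 (by linarith : (0:ℝ) ≤ β₀ + κ)
      have e2 := mul_le_mul_of_nonneg_left (htermP i) hδ
      have e5 := mul_le_mul_of_nonneg_right hK3 hF0
      linarith [e1, e2, e5]
    linarith
  have hsum := Finset.sum_le_sum (fun i (_ : i ∈ Finset.univ) => key i)
  rw [Finset.sum_const, Finset.card_univ, Fintype.card_fin, nsmul_eq_mul] at hsum
  refine le_trans hsum (le_of_eq (by ring))


set_option maxHeartbeats 1000000 in
/-- forward invariance of {(p,q) : p_i ≥ 0, q_i ≥ 0, p_i+q_i ≤ 1}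
for the SAIS mean-field system. -/
theorem sais_invariance (N : ℕ) (a : Fin N → Fin N → ℝ)
    (ha : ∀ i j, 0 ≤ a i j) (β₀ βa κ δ : ℝ)
    (hβ₀ : 0 ≤ β₀) (hβa : 0 ≤ βa) (hκ : 0 ≤ κ) (hδ : 0 ≤ δ)
    (p q : ℝ → Fin N → ℝ)
    (hpC1 : ∀ i, ContDiff ℝ 1 (fun t => p t i))
    (hqC1 : ∀ i, ContDiff ℝ 1 (fun t => q t i))
    (hode_p : ∀ t i, HasDerivAt (fun t => p t i)
      (β₀ * (1 - p t i - q t i) * (∑ j, a i j * p t j)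
        + βa * q t i * (∑ j, a i j * p t j) - δ * p t i) t)
    (hode_q : ∀ t i, HasDerivAt (fun t => q t i)
      (κ * (1 - p t i - q t i) * (∑ j, a i j * p t j)
        - βa * q t i * (∑ j, a i j * p t j)) t)
    (hinit : ∀ i, 0 ≤ p 0 i ∧ 0 ≤ q 0 i ∧ p 0 i + q 0 i ≤ 1) :
    ∀ t, 0 ≤ t → ∀ i, 0 ≤ p t i ∧ 0 ≤ q t i ∧ p t i + q t i ≤ 1 := by
  intro t ht
  have hA0 : (0:ℝ) ≤ ∑ i, ∑ j, a i j :=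
    Finset.sum_nonneg fun i _ => Finset.sum_nonneg fun j _ => ha i j
  set A : ℝ := ∑ i, ∑ j, a i j with hA_def
  have hA : 0 ≤ A := hA0
  have hAi : ∀ i : Fin N, (∑ j, a i j) ≤ A := by
    intro i
    rw [hA_def]
    exact Finset.single_le_sum (f := fun i => ∑ j, a i j)
      (fun k _ => Finset.sum_nonneg fun j _ => ha k j) (Finset.mem_univ i)
  have hpc : ∀ i, Continuous fun s => p s i := fun i => (hpC1 i).continuous
  have hqc : ∀ i, Continuous fun s => q s i := fun i => (hqC1 i).continuous
  obtain ⟨M0, hM0⟩ := (isCompact_Icc (a := (0:ℝ)) (b := t)).exists_bound_of_continuousOn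
      (Continuous.continuousOn
        (continuous_finset_sum Finset.univ fun i _ => ((hpc i).abs.add (hqc i).abs)))
  set M : ℝ := max M0 0 with hM_def
  have hMnn : (0:ℝ) ≤ M := le_max_right _ _
  have hPM : ∀ s ∈ Set.Icc (0:ℝ) t, ∀ i, |p s i| ≤ M ∧ |q s i| ≤ M := by
    intro s hs i
    have h1 := hM0 s hs
    rw [Real.norm_eq_abs] at h1
    have h2 : (∑ k, (|p s k| + |q s k|)) ≤ M0 := le_trans (le_abs_self _) h1
    have h3 : |p s i| + |q s i| ≤ ∑ k, (|p s k| + |q s k|) :=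
      Finset.single_le_sum (f := fun k => |p s k| + |q s k|)
        (fun k _ => by positivity) (Finset.mem_univ i)
    have h4 := abs_nonneg (p s i)
    have h5 := abs_nonneg (q s i)
    have h6 : M0 ≤ M := le_max_left _ _
    exact ⟨by linarith, by linarith⟩
  set F : ℝ → ℝ := fun s => ∑ i,
    (max (-(p s i)) 0 + max (-(q s i)) 0 + max (p s i + q s i - 1) 0) with hF_def
  set F' : ℝ → ℝ := fun s => ∑ i,
    (Dpos (-(p s i)) (-(β₀ * (1 - p s i - q s i) * (∑ j, a i j * p s j)
          + βa * q s i * (∑ j, a i j * p s j) - δ * p s i))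
     + Dpos (-(q s i)) (-(κ * (1 - p s i - q s i) * (∑ j, a i j * p s j)
          - βa * q s i * (∑ j, a i j * p s j)))
     + Dpos (p s i + q s i - 1) ((β₀ * (1 - p s i - q s i) * (∑ j, a i j * p s j)
          + βa * q s i * (∑ j, a i j * p s j) - δ * p s i)
        + (κ * (1 - p s i - q s i) * (∑ j, a i j * p s j)
          - βa * q s i * (∑ j, a i j * p s j)))) with hF'_def
  set K : ℝ := (3*(N:ℝ)) * ((β₀+βa+κ+δ) * ((1+2*M)*A + A*M + 1)) with hK_def
  have hFcont : ContinuousOn F (Set.Icc 0 t) := by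
    rw [hF_def]
    apply Continuous.continuousOn
    apply continuous_finset_sum
    intro i _
    exact (((hpc i).neg.max continuous_const).add ((hqc i).neg.max continuous_const)).add
      ((((hpc i).add (hqc i)).sub continuous_const).max continuous_const)
  have htend : ∀ x : ℝ, Filter.Tendsto (fun z => (z - x)⁻¹ * (F z - F x))
      (𝓝[>] x) (𝓝 (F' x)) := by
    intro x
    have hsum : ∀ z, (z - x)⁻¹ * (F z - F x)
        = ∑ i, ((z - x)⁻¹ * (max (-(p z i)) 0 - max (-(p x i)) 0)
          + (z - x)⁻¹ * (max (-(q z i)) 0 - max (-(q x i)) 0)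
          + (z - x)⁻¹ * (max (p z i + q z i - 1) 0 - max (p x i + q x i - 1) 0)) := by
      intro z
      rw [hF_def]
      simp only
      rw [← Finset.sum_sub_distrib, Finset.mul_sum]
      exact Finset.sum_congr rfl fun i _ => by ring
    refine Filter.Tendsto.congr (fun z => (hsum z).symm) ?_
    rw [hF'_def]
    simp only
    apply tendsto_finset_sum
    intro i _
    have t1 := tendsto_quot_posPart ((hode_p x i).neg)
    have t2 := tendsto_quot_posPart ((hode_q x i).neg)
    have t3 := tendsto_quot_posPart (((hode_p x i).add (hode_q x i)).sub_const 1)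
    exact (t1.add t2).add t3
  have hbound : ∀ x ∈ Set.Ico (0:ℝ) t, F' x ≤ K * F x + 0 := by
    intro x hx
    rw [add_zero]
    have hxI := Set.Ico_subset_Icc_self hx
    rw [hF'_def, hF_def, hK_def]
    simp only
    exact sais_fprime_bound N a ha β₀ βa κ δ A M hβ₀ hβa hκ hδ hA hMnn hAi
      (p x) (q x) (fun i => (hPM x hxI i).1) (fun i => (hPM x hxI i).2)
  have hinit0 : F 0 ≤ 0 := by
    rw [hF_def]
    refine Finset.sum_nonpos fun i _ => ?_
    obtain ⟨h1, h2, h3⟩ := hinit i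
    have e1 : max (-(p 0 i)) 0 ≤ 0 := max_le (by linarith) le_rfl
    have e2 : max (-(q 0 i)) 0 ≤ 0 := max_le (by linarith) le_rfl
    have e3 : max (p 0 i + q 0 i - 1) 0 ≤ 0 := max_le (by linarith) le_rfl
    linarith
  have hgron := le_gronwallBound_of_liminf_deriv_right_le (f := F) (f' := F')
      (δ := 0) (K := K) (ε := 0) (a := 0) (b := t) hFcont
      (fun x _ r hr => ((htend x).eventually_lt_const hr).frequently)
      hinit0 hbound t (Set.right_mem_Icc.mpr ht)
  rw [sub_zero, gronwallBound_ε0_δ0] at hgron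
  intro i
  have htr : max (-(p t i)) 0 + max (-(q t i)) 0 + max (p t i + q t i - 1) 0 ≤ F t := by
    rw [hF_def]
    exact Finset.single_le_sum (f := fun k =>
      max (-(p t k)) 0 + max (-(q t k)) 0 + max (p t k + q t k - 1) 0)
      (fun k _ => by positivity) (Finset.mem_univ i)
  have m1 := le_max_left (-(p t i)) (0:ℝ)
  have m2 := le_max_right (-(p t i)) (0:ℝ)
  have m3 := le_max_left (-(q t i)) (0:ℝ)
  have m4 := le_max_right (-(q t i)) (0:ℝ)
  have m5 := le_max_left (p t i + q t i - 1) (0:ℝ)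
  have m6 := le_max_right (p t i + q t i - 1) (0:ℝ)
  exact ⟨by linarith, by linarith, by linarith⟩
end
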